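/- arXiv:2102.00979 — 2 statements merged into one kernel-verified Lean document; each statement's English description precedes it below -/
import Mathlib

section
/- Let λ, α ∈ ℂ∖{0}, β, γ, η, ε, θ ∈ ℂ with (η,ε,θ) ≠ (0,0,0), let M(λ,α,β,γ) be any one of the 𝔏-modules Ω(λ,α,β,γ), Δ(λ,α,β,γ), Θ(λ,α,β,γ), and let V(η,ε,θ) be an irreducible highest weight 𝔏-module with highest weight (η,ε,θ). Then for every integer r > 2 and every nonzero g(s,t) ∈ M(λ,α,β,γ), there exist v ∈ V(η,ε,θ) and l, m ∈ ℤ such that ω_{l,m}^{(r)} · (g(s,t) ⊗ v) ≠ 0 in the tensor product 𝔏-module M(λ,α,β,γ) ⊗ V(η,ε,θ), where ω_{l,m}^{(r)} = ∑_{i=0}^{r} C(r,i)(−1)^{r−i} d_{l−m−i} d_{m+i} is an element of the universal enveloping algebra U(𝔏) and C(r,i) denotes the binomial coefficient. -/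
open scoped TensorProduct

noncomputable section

/-- The affine-Virasoro algebra of type `A₁`: a complex Lie algebra `L` equipped with a
basis `{e_i, f_i, h_i, d_i (i ∈ ℤ), C}` subject to the defining bracket relations. -/
structure AVAlgebra (L : Type) [LieRing L] [LieAlgebra ℂ L] where
  e : ℤ → L
  f : ℤ → L
  h : ℤ → L
  d : ℤ → L
  cC : L
  bracket_ef : ∀ i j : ℤ, ⁅e i, f j⁆ = h (i + j) + (if i + j = 0 then (i : ℂ) • cC else 0)
  bracket_he : ∀ i j : ℤ, ⁅h i, e j⁆ = (2 : ℂ) • e (i + j)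
  bracket_hf : ∀ i j : ℤ, ⁅h i, f j⁆ = (-2 : ℂ) • f (i + j)
  bracket_dd : ∀ i j : ℤ, ⁅d i, d j⁆ = ((j : ℂ) - (i : ℂ)) • d (i + j)
      + (if i + j = 0 then (((i : ℂ) ^ 3 - (i : ℂ)) / 12) • cC else 0)
  bracket_dh : ∀ i j : ℤ, ⁅d i, h j⁆ = (j : ℂ) • h (i + j)
  bracket_hh : ∀ i j : ℤ, ⁅h i, h j⁆ = (if i + j = 0 then ((-2 : ℂ) * (i : ℂ)) • cC else 0)
  bracket_de : ∀ i j : ℤ, ⁅d i, e j⁆ = (j : ℂ) • e (i + j)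
  bracket_df : ∀ i j : ℤ, ⁅d i, f j⁆ = (j : ℂ) • f (i + j)
  bracket_ee : ∀ i j : ℤ, ⁅e i, e j⁆ = 0
  bracket_ff : ∀ i j : ℤ, ⁅f i, f j⁆ = 0
  central : ∀ x : L, ⁅cC, x⁆ = 0
  indep : LinearIndependent ℂ
    (Sum.elim (fun q : Fin 4 × ℤ => ![e, f, h, d] q.1 q.2) fun _ : Unit => cC)
  spans : Submodule.span ℂ
    (Set.range (Sum.elim (fun q : Fin 4 × ℤ => ![e, f, h, d] q.1 q.2) fun _ : Unit => cC)) = ⊤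

/-- The polynomial ring ℂ[s,t]. -/
abbrev Pst : Type := MvPolynomial (Fin 2) ℂ

/-- The variable `s` of ℂ[s,t]. -/
def sVar : Pst := MvPolynomial.X 0

/-- The variable `t` of ℂ[s,t]. -/
def tVar : Pst := MvPolynomial.X 1

/-- The substitution operator `g(s,t) ↦ g(s-a, t-b)` on ℂ[s,t]. -/
def shiftST (a b : ℂ) : Module.End ℂ Pst :=
  (MvPolynomial.aeval ![sVar - MvPolynomial.C a, tVar - MvPolynomial.C b]).toLinearMap

/-- The operator by which `d_i` acts on each of `Ω(λ,α,β,γ)`, `Δ(λ,α,β,γ)`, `Θ(λ,α,β,γ)`: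
`g(s,t) ↦ λ^i (s+iγ) g(s-i,t)`. -/
def dOp (lam ga : ℂ) (i : ℤ) : Module.End ℂ Pst :=
  lam ^ i • (LinearMap.mulLeft ℂ (sVar + MvPolynomial.C ((i : ℂ) * ga)) ∘ₗ shiftST i 0)

/-- The operator by which `h_i` acts: `g(s,t) ↦ λ^i t g(s-i,t)`. -/
def hOp (lam : ℂ) (i : ℤ) : Module.End ℂ Pst :=
  lam ^ i • (LinearMap.mulLeft ℂ tVar ∘ₗ shiftST i 0)

/-- The operator by which `e_i` acts on `Ω(λ,α,β,γ)`: `g(s,t) ↦ λ^i α g(s-i,t-2)`. -/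
def omegaE (lam al : ℂ) (i : ℤ) : Module.End ℂ Pst :=
  (lam ^ i * al) • shiftST i 2

/-- The operator by which `f_i` acts on `Ω(λ,α,β,γ)`:
`g(s,t) ↦ -(λ^i/α)(t/2-β)(t/2+β+1) g(s-i,t+2)`. -/
def omegaF (lam al be : ℂ) (i : ℤ) : Module.End ℂ Pst :=
  (-(lam ^ i / al)) • (LinearMap.mulLeft ℂ
    ((MvPolynomial.C (2⁻¹ : ℂ) * tVar - MvPolynomial.C be) *
      (MvPolynomial.C (2⁻¹ : ℂ) * tVar + MvPolynomial.C (be + 1))) ∘ₗ shiftST i (-2))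

/-- The operator by which `e_i` acts on `Δ(λ,α,β,γ)`:
`g(s,t) ↦ -(λ^i/α)(t/2+β)(t/2-β-1) g(s-i,t-2)`. -/
def deltaE (lam al be : ℂ) (i : ℤ) : Module.End ℂ Pst :=
  (-(lam ^ i / al)) • (LinearMap.mulLeft ℂ
    ((MvPolynomial.C (2⁻¹ : ℂ) * tVar + MvPolynomial.C be) *
      (MvPolynomial.C (2⁻¹ : ℂ) * tVar - MvPolynomial.C (be + 1))) ∘ₗ shiftST i 2)

/-- The operator by which `f_i` acts on `Δ(λ,α,β,γ)`: `g(s,t) ↦ λ^i α g(s-i,t+2)`. -/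
def deltaF (lam al : ℂ) (i : ℤ) : Module.End ℂ Pst :=
  (lam ^ i * al) • shiftST i (-2)

/-- The operator by which `e_i` acts on `Θ(λ,α,β,γ)`: `g(s,t) ↦ λ^i α (t/2+β) g(s-i,t-2)`. -/
def thetaE (lam al be : ℂ) (i : ℤ) : Module.End ℂ Pst :=
  (lam ^ i * al) • (LinearMap.mulLeft ℂ
    (MvPolynomial.C (2⁻¹ : ℂ) * tVar + MvPolynomial.C be) ∘ₗ shiftST i 2)

/-- The operator by which `f_i` acts on `Θ(λ,α,β,γ)`: `g(s,t) ↦ -(λ^i/α)(t/2-β) g(s-i,t+2)`. -/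
def thetaF (lam al be : ℂ) (i : ℤ) : Module.End ℂ Pst :=
  (-(lam ^ i / al)) • (LinearMap.mulLeft ℂ
    (MvPolynomial.C (2⁻¹ : ℂ) * tVar - MvPolynomial.C be) ∘ₗ shiftST i (-2))

/-- `M` is an 𝔏-module whose underlying space is ℂ[s,t] (via the linear equivalence `φ`) and
on which the basis elements of 𝔏 act by the prescribed families of operators (`C` acting by
zero). -/
def ActsAs {L : Type} [LieRing L] [LieAlgebra ℂ L] (A : AVAlgebra L)
    (M : Type) [AddCommGroup M] [Module ℂ M] [LieRingModule L M]
    (φ : M ≃ₗ[ℂ] Pst) (Fe Ff Fh Fd : ℤ → Module.End ℂ Pst) : Prop :=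
  (∀ (i : ℤ) (m : M), φ ⁅A.e i, m⁆ = Fe i (φ m)) ∧
  (∀ (i : ℤ) (m : M), φ ⁅A.f i, m⁆ = Ff i (φ m)) ∧
  (∀ (i : ℤ) (m : M), φ ⁅A.h i, m⁆ = Fh i (φ m)) ∧
  (∀ (i : ℤ) (m : M), φ ⁅A.d i, m⁆ = Fd i (φ m)) ∧
  (∀ m : M, ⁅A.cC, m⁆ = 0)

/-- `M` is (a copy of) the 𝔏-module `Ω(λ,α,β,γ)`. -/
def IsOmega {L : Type} [LieRing L] [LieAlgebra ℂ L] (A : AVAlgebra L)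
    (lam al be ga : ℂ) (M : Type) [AddCommGroup M] [Module ℂ M] [LieRingModule L M]
    (φ : M ≃ₗ[ℂ] Pst) : Prop :=
  ActsAs A M φ (omegaE lam al) (omegaF lam al be) (hOp lam) (dOp lam ga)

/-- `M` is (a copy of) the 𝔏-module `Δ(λ,α,β,γ)`. -/
def IsDelta {L : Type} [LieRing L] [LieAlgebra ℂ L] (A : AVAlgebra L)
    (lam al be ga : ℂ) (M : Type) [AddCommGroup M] [Module ℂ M] [LieRingModule L M]
    (φ : M ≃ₗ[ℂ] Pst) : Prop :=
  ActsAs A M φ (deltaE lam al be) (deltaF lam al) (hOp lam) (dOp lam ga)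

/-- `M` is (a copy of) the 𝔏-module `Θ(λ,α,β,γ)`. -/
def IsTheta {L : Type} [LieRing L] [LieAlgebra ℂ L] (A : AVAlgebra L)
    (lam al be ga : ℂ) (M : Type) [AddCommGroup M] [Module ℂ M] [LieRingModule L M]
    (φ : M ≃ₗ[ℂ] Pst) : Prop :=
  ActsAs A M φ (thetaE lam al be) (thetaF lam al be) (hOp lam) (dOp lam ga)

/-- `v` is a highest weight vector of weight `(η, ε, θ)`. -/
def IsHWVector {L : Type} [LieRing L] [LieAlgebra ℂ L] (A : AVAlgebra L)
    (V : Type) [AddCommGroup V] [Module ℂ V] [LieRingModule L V]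
    (eta eps th : ℂ) (v : V) : Prop :=
  ⁅A.e 0, v⁆ = 0 ∧
  (∀ i : ℤ, 1 ≤ i → ⁅A.e i, v⁆ = 0 ∧ ⁅A.f i, v⁆ = 0 ∧ ⁅A.h i, v⁆ = 0 ∧ ⁅A.d i, v⁆ = 0) ∧
  ⁅A.d 0, v⁆ = eta • v ∧ ⁅A.h 0, v⁆ = eps • v ∧ ⁅A.cC, v⁆ = th • v

/-- `V` is an irreducible highest weight 𝔏-module with highest weight `(η, ε, θ)`: it is
irreducible and generated by a nonzero highest weight vector of weight `(η, ε, θ)`. -/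
def IsIrrHW {L : Type} [LieRing L] [LieAlgebra ℂ L] (A : AVAlgebra L)
    (V : Type) [AddCommGroup V] [Module ℂ V] [LieRingModule L V] [LieModule ℂ L V]
    (eta eps th : ℂ) : Prop :=
  LieModule.IsIrreducible ℂ L V ∧
  ∃ v : V, v ≠ 0 ∧ LieSubmodule.lieSpan ℂ L ({v} : Set V) = ⊤ ∧ IsHWVector A V eta eps th v

/-- The action of the universal enveloping algebra `U(𝔏)` on an 𝔏-module `X`. -/
def uAct {L : Type} [LieRing L] [LieAlgebra ℂ L]
    (X : Type) [AddCommGroup X] [Module ℂ X] [LieRingModule L X] [LieModule ℂ L X] :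
    UniversalEnvelopingAlgebra ℂ L →ₐ[ℂ] Module.End ℂ X :=
  UniversalEnvelopingAlgebra.lift ℂ (LieModule.toEnd ℂ L X)

/-- The element `ω_{l,m}^{(r)} = ∑_{i=0}^{r} C(r,i)(−1)^{r−i} d_{l−m−i} d_{m+i}` of `U(𝔏)`. -/
def omegaLMR {L : Type} [LieRing L] [LieAlgebra ℂ L] (A : AVAlgebra L)
    (l m : ℤ) (r : ℕ) : UniversalEnvelopingAlgebra ℂ L :=
  ∑ i ∈ Finset.range (r + 1),
    ((r.choose i : ℂ) * (-1) ^ (r - i)) •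
      (UniversalEnvelopingAlgebra.ι ℂ (A.d (l - m - i)) *
        UniversalEnvelopingAlgebra.ι ℂ (A.d (m + i)))

-- helpers
lemma shiftST_apply' (a b : ℂ) (p : Pst) :
    shiftST a b p = MvPolynomial.aeval ![sVar - MvPolynomial.C a, tVar - MvPolynomial.C b] p := rfl

lemma shiftST_mul (a b : ℂ) (p q : Pst) :
    shiftST a b (p * q) = shiftST a b p * shiftST a b q := by
  simp [shiftST_apply']

lemma shiftST_sVar (a b : ℂ) : shiftST a b sVar = sVar - MvPolynomial.C a := by
  simp [shiftST_apply', sVar]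

lemma shiftST_C (a b c : ℂ) : shiftST a b (MvPolynomial.C c) = MvPolynomial.C c := by
  simp [shiftST_apply', MvPolynomial.algebraMap_eq]

lemma shiftST_comp (a b c d : ℂ) (p : Pst) :
    shiftST a b (shiftST c d p) = shiftST (a + c) (b + d) p := by
  rw [shiftST_apply', shiftST_apply', MvPolynomial.comp_aeval_apply]
  have h : (fun i => (MvPolynomial.aeval ![sVar - MvPolynomial.C a, tVar - MvPolynomial.C b])
        ((![sVar - MvPolynomial.C c, tVar - MvPolynomial.C d]) i))
      = ![sVar - MvPolynomial.C (a + c), tVar - MvPolynomial.C (b + d)] := by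
    funext i
    fin_cases i <;>
      simp [sVar, tVar, map_sub, MvPolynomial.algebraMap_eq, sub_sub, map_add]
  rw [h, ← shiftST_apply']

lemma shiftST_zero (p : Pst) : shiftST 0 0 p = p := by
  rw [shiftST_apply']
  have h : ![sVar - MvPolynomial.C (0:ℂ), tVar - MvPolynomial.C (0:ℂ)]
      = (MvPolynomial.X : Fin 2 → Pst) := by
    funext i; fin_cases i <;> simp [sVar, tVar]
  rw [h, MvPolynomial.aeval_X_left_apply]

lemma shiftST_eq_zero_iff (a b : ℂ) (p : Pst) : shiftST a b p = 0 ↔ p = 0 := by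
  constructor
  · intro h
    have h2 := congrArg (shiftST (-a) (-b)) h
    rwa [shiftST_comp, neg_add_cancel, neg_add_cancel, shiftST_zero, map_zero] at h2
  · rintro rfl; exact map_zero _

lemma sVar_add_C_ne_zero (c : ℂ) : sVar + MvPolynomial.C c ≠ 0 := by
  intro h
  have h2 := congrArg (MvPolynomial.eval (fun _ => 1 - c)) h
  simp [sVar] at h2

lemma dOp_apply (lam ga : ℂ) (i : ℤ) (p : Pst) :
    dOp lam ga i p = lam ^ i • ((sVar + MvPolynomial.C ((i : ℂ) * ga)) * shiftST i 0 p) := rfl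

lemma dOp_ne_zero (lam ga : ℂ) (hlam : lam ≠ 0) (i : ℤ) {p : Pst} (hp : p ≠ 0) :
    dOp lam ga i p ≠ 0 := by
  rw [dOp_apply]
  exact smul_ne_zero (zpow_ne_zero i hlam)
    (mul_ne_zero (sVar_add_C_ne_zero _) (fun h => hp ((shiftST_eq_zero_iff _ _ _).mp h)))

lemma dOp_dOp (lam ga : ℂ) (hlam : lam ≠ 0) (a b : ℤ) (p : Pst) :
    dOp lam ga a (dOp lam ga b p) =
      lam ^ (a + b) • (((sVar + MvPolynomial.C ((a:ℂ) * ga)) *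
        (sVar - MvPolynomial.C (a:ℂ) + MvPolynomial.C ((b:ℂ) * ga))) *
          shiftST (a + b) 0 p) := by
  rw [dOp_apply, dOp_apply, map_smul, shiftST_mul, map_add, shiftST_sVar, shiftST_C,
    shiftST_comp, add_zero, mul_smul_comm, smul_smul, ← zpow_add₀ hlam, mul_assoc]

lemma fwdDiff_iter_zero_fun {G : Type*} [AddCommGroup G] (n : ℕ) :
    (fwdDiff (1:ℕ))^[n] (fun _ : ℕ => (0:G)) = fun _ => 0 := by
  induction n with
  | zero => rfl
  | succ n ih => rw [Function.iterate_succ_apply, fwdDiff_const, ih]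

lemma alt_sum_eq_zero {G : Type} [AddCommGroup G] [Module ℂ G] (f : ℕ → G)
    (h3 : (fwdDiff (1:ℕ))^[3] f = fun _ => 0) (r : ℕ) (hr : 3 ≤ r) :
    ∑ i ∈ Finset.range (r + 1), ((r.choose i : ℂ) * (-1) ^ (r - i)) • f i = 0 := by
  have h1 : ∑ i ∈ Finset.range (r + 1), ((r.choose i : ℂ) * (-1) ^ (r - i)) • f i
      = (fwdDiff (1:ℕ))^[r] f 0 := by
    rw [fwdDiff_iter_eq_sum_shift]
    refine Finset.sum_congr rfl (fun i _ => ?_)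
    rw [← Int.cast_smul_eq_zsmul ℂ]
    congr 1
    · push_cast; ring
    · simp
  rw [h1]
  obtain ⟨q, rfl⟩ : ∃ q, r = q + 3 := ⟨r - 3, by omega⟩
  rw [Function.iterate_add_apply, h3, fwdDiff_iter_zero_fun]

lemma key_poly (r : ℕ) (hr : 3 ≤ r) (l m : ℤ) (ga : ℂ) :
    ∑ i ∈ Finset.range (r + 1), ((r.choose i : ℂ) * (-1) ^ (r - i)) •
      ((sVar + MvPolynomial.C (((l - m - (i:ℤ) : ℤ) : ℂ) * ga)) *
        (sVar - MvPolynomial.C ((l - m - (i:ℤ) : ℤ) : ℂ) +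
          MvPolynomial.C (((m + (i:ℤ) : ℤ) : ℂ) * ga))) = 0 := by
  refine alt_sum_eq_zero _ ?_ r hr
  funext y
  show fwdDiff 1 (fwdDiff 1 (fwdDiff 1 _)) y = 0
  simp only [fwdDiff]
  push_cast
  simp only [map_sub, map_add, map_mul, map_one, map_ofNat]
  ring

lemma key_sum (lam ga : ℂ) (hlam : lam ≠ 0) (r : ℕ) (hr : 3 ≤ r) (l m : ℤ) (p : Pst) :
    ∑ i ∈ Finset.range (r + 1), ((r.choose i : ℂ) * (-1) ^ (r - i)) •
      dOp lam ga (l - m - (i:ℤ)) (dOp lam ga (m + (i:ℤ)) p) = 0 := by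
  have step : ∀ i ∈ Finset.range (r + 1),
      ((r.choose i : ℂ) * (-1) ^ (r - i)) •
        dOp lam ga (l - m - (i:ℤ)) (dOp lam ga (m + (i:ℤ)) p)
      = lam ^ l • ((((r.choose i : ℂ) * (-1) ^ (r - i)) •
          ((sVar + MvPolynomial.C (((l - m - (i:ℤ) : ℤ) : ℂ) * ga)) *
            (sVar - MvPolynomial.C ((l - m - (i:ℤ) : ℤ) : ℂ) +
              MvPolynomial.C (((m + (i:ℤ) : ℤ) : ℂ) * ga)))) * shiftST l 0 p) := by
    intro i _
    have hab : (l - m - (i:ℤ)) + (m + (i:ℤ)) = l := by ring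
    rw [dOp_dOp lam ga hlam, hab, smul_comm, smul_mul_assoc]
    rw [show ((l - m - (i:ℤ) : ℤ) : ℂ) + ((m + (i:ℤ) : ℤ) : ℂ) = (l : ℂ) by
      rw [← Int.cast_add, hab]]
  rw [Finset.sum_congr rfl step, ← Finset.smul_sum, ← Finset.sum_mul,
    key_poly r hr l m ga, zero_mul, smul_zero]

lemma tmul_ne_zero' {M : Type} [AddCommGroup M] [Module ℂ M] {V : Type} [AddCommGroup V]
    [Module ℂ V] {x : M} {y : V} (hx : x ≠ 0) (hy : y ≠ 0) : x ⊗ₜ[ℂ] y ≠ 0 := by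
  obtain ⟨fx, hfx⟩ : ∃ f : Module.Dual ℂ M, f x ≠ 0 := by
    by_contra hc; push_neg at hc
    exact hx ((Module.forall_dual_apply_eq_zero_iff ℂ x).mp (by simpa using hc))
  obtain ⟨fy, hfy⟩ : ∃ f : Module.Dual ℂ V, f y ≠ 0 := by
    by_contra hc; push_neg at hc
    exact hy ((Module.forall_dual_apply_eq_zero_iff ℂ y).mp (by simpa using hc))
  intro h
  have h2 := congrArg (fun z => (TensorProduct.lid ℂ ℂ) ((TensorProduct.map fx fy) z)) h
  simp only [TensorProduct.map_tmul, TensorProduct.lid_tmul, smul_eq_mul, map_zero] at h2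
  exact mul_ne_zero hfx hfy h2


/-- for `r > 2` and `0 ≠ g ∈ M(λ,α,β,γ)` there are `v ∈ V(η,ε,θ)` and
`l, m ∈ ℤ` with `ω_{l,m}^{(r)} · (g ⊗ v) ≠ 0`. -/
theorem stmt_10 {L : Type} [LieRing L] [LieAlgebra ℂ L] (A : AVAlgebra L)
    (lam al be ga eta eps th : ℂ) (hlam : lam ≠ 0) (hal : al ≠ 0)
    (hwt : (eta, eps, th) ≠ (0, 0, 0))
    (M : Type) [AddCommGroup M] [Module ℂ M] [LieRingModule L M] [LieModule ℂ L M] (φ : M ≃ₗ[ℂ] Pst)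
    (hM : IsOmega A lam al be ga M φ ∨ IsDelta A lam al be ga M φ ∨
      IsTheta A lam al be ga M φ)
    (V : Type) [AddCommGroup V] [Module ℂ V] [LieRingModule L V] [LieModule ℂ L V] (hV : IsIrrHW A V eta eps th) :
    ∀ r : ℕ, 2 < r → ∀ g : M, g ≠ 0 →
      ∃ (v : V) (l m : ℤ), uAct (M ⊗[ℂ] V) (omegaLMR A l m r) (g ⊗ₜ[ℂ] v) ≠ 0 := by
  intro r hr g hg
  have hd : ∀ (i : ℤ) (x : M), φ ⁅A.d i, x⁆ = dOp lam ga i (φ x) := by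
    rcases hM with h | h | h
    · exact h.2.2.2.1
    · exact h.2.2.2.1
    · exact h.2.2.2.1
  obtain ⟨-, v, hv0, -, he0, hpos, hd0, hh0, hC0⟩ := hV
  have hdw : ∀ j : ℤ, ⁅A.d j, ⁅A.h (-1), v⁆⁆
      = (-1 : ℂ) • ⁅A.h (j + -1), v⁆ + ⁅A.h (-1), ⁅A.d j, v⁆⁆ := by
    intro j
    rw [leibniz_lie, A.bracket_dh, smul_lie]
    norm_num
  obtain ⟨w, k, u, hu, hku, hwj⟩ :
      ∃ (w : V) (k : ℕ) (u : V), u ≠ 0 ∧ ⁅A.d (k : ℤ), w⁆ = u ∧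
        ∀ j : ℤ, (k : ℤ) < j → ⁅A.d j, w⁆ = 0 := by
    by_cases heta : eta = 0
    · by_cases heps : eps = 0
      · have hth : th ≠ 0 := by
          intro h; exact hwt (by simp [heta, heps, h])
        have hw0 : ⁅A.h (-1), v⁆ ≠ 0 := by
          intro hzero
          have h2 : ⁅A.h 1, ⁅A.h (-1), v⁆⁆ = (-2 : ℂ) • (th • v) := by
            rw [leibniz_lie, A.bracket_hh, (hpos 1 le_rfl).2.2.1, lie_zero, add_zero]
            norm_num [smul_lie, hC0]
          rw [hzero, lie_zero] at h2
          have h3 : th • v = 0 := by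
            rcases smul_eq_zero.mp h2.symm with h4 | h4
            · norm_num at h4
            · exact h4
          exact hv0 ((smul_eq_zero.mp h3).resolve_left hth)
        refine ⟨⁅A.h (-1), v⁆, 0, -⁅A.h (-1), v⁆, neg_ne_zero.mpr hw0, ?_, ?_⟩
        · rw [Nat.cast_zero, hdw 0, hd0, heta, zero_smul, lie_zero, add_zero]
          norm_num
        · intro j hj
          have h1 : ⁅A.h (j + -1), v⁆ = 0 := by
            by_cases hj1 : j = 1
            · subst hj1
              rw [show (1 + -1 : ℤ) = 0 by norm_num, hh0, heps, zero_smul]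
            · exact (hpos (j + -1) (by omega)).2.2.1
          have h2 : ⁅A.d j, v⁆ = 0 := (hpos j (by omega)).2.2.2
          rw [hdw j, h1, h2, lie_zero, smul_zero, add_zero]
      · refine ⟨⁅A.h (-1), v⁆, 1, (-eps) • v,
          smul_ne_zero (neg_ne_zero.mpr heps) hv0, ?_, ?_⟩
        · rw [Nat.cast_one, hdw 1, (hpos 1 le_rfl).2.2.2, lie_zero, add_zero,
            show (1 + -1 : ℤ) = 0 by norm_num, hh0, smul_smul]
          norm_num
        · intro j hj
          rw [hdw j, (hpos (j + -1) (by omega)).2.2.1, (hpos j (by omega)).2.2.2,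
            lie_zero, smul_zero, add_zero]
    · exact ⟨v, 0, eta • v, smul_ne_zero heta hv0, by simpa using hd0,
        fun j hj => (hpos j (by omega)).2.2.2⟩
  refine ⟨w, ((k : ℤ) + 1) + r + k, (k : ℤ) + 1, ?_⟩
  set l : ℤ := ((k : ℤ) + 1) + r + k with hl
  set m : ℤ := (k : ℤ) + 1 with hm
  have hE : uAct (M ⊗[ℂ] V) (omegaLMR A l m r) (g ⊗ₜ[ℂ] w)
      = ∑ i ∈ Finset.range (r + 1), ((r.choose i : ℂ) * (-1) ^ (r - i)) •
          ⁅A.d (l - m - i), ⁅A.d (m + i), g ⊗ₜ[ℂ] w⁆⁆ := by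
    simp only [omegaLMR, uAct, map_sum, map_smul, map_mul,
      UniversalEnvelopingAlgebra.lift_ι_apply, LinearMap.sum_apply, LinearMap.smul_apply,
      Module.End.mul_apply, LieModule.toEnd_apply_apply]
  have hsplit : ∀ i ∈ Finset.range (r + 1),
      ((r.choose i : ℂ) * (-1) ^ (r - i)) • ⁅A.d (l - m - i), ⁅A.d (m + i), g ⊗ₜ[ℂ] w⁆⁆
      = (((r.choose i : ℂ) * (-1) ^ (r - i)) • ⁅A.d (l - m - i), ⁅A.d (m + i), g⁆⁆) ⊗ₜ[ℂ] w
        + ((r.choose i : ℂ) * (-1) ^ (r - i)) •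
            (⁅A.d (m + i), g⁆ ⊗ₜ[ℂ] ⁅A.d (l - m - i), w⁆) := by
    intro i hi
    rw [TensorProduct.LieModule.lie_tmul_right, hwj (m + i) (by omega), TensorProduct.tmul_zero, add_zero,
      TensorProduct.LieModule.lie_tmul_right, smul_add, TensorProduct.smul_tmul']
  rw [hE, Finset.sum_congr rfl hsplit, Finset.sum_add_distrib]
  have hS : ∑ i ∈ Finset.range (r + 1), (((r.choose i : ℂ) * (-1) ^ (r - i)) •
      ⁅A.d (l - m - i), ⁅A.d (m + i), g⁆⁆) = 0 := by
    apply (LinearEquiv.map_eq_zero_iff φ).mp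
    rw [map_sum]
    simp only [map_smul, hd]
    exact key_sum lam ga hlam r (by omega) l m (φ g)
  rw [← TensorProduct.sum_tmul, hS, TensorProduct.zero_tmul, zero_add]
  rw [Finset.sum_eq_single_of_mem r (Finset.self_mem_range_succ r) (fun i hi hir => by
    have hi' := Finset.mem_range.mp hi
    rw [hwj (l - m - i) (by omega), TensorProduct.tmul_zero, smul_zero])]
  have hlmr : l - m - (r : ℤ) = (k : ℤ) := by omega
  rw [hlmr, hku]
  simp only [Nat.choose_self, Nat.cast_one, Nat.sub_self, pow_zero, mul_one, one_smul]
  refine tmul_ne_zero' ?_ hu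
  intro hzero
  have hdg := hd (m + r) g
  rw [hzero, map_zero] at hdg
  exact dOp_ne_zero lam ga hlam (m + (r : ℤ))
    (fun h0 => hg ((LinearEquiv.map_eq_zero_iff φ).mp h0)) hdg.symm

end
end

section
/- Let λ, α ∈ ℂ∖{0}, β, γ, η, ε, θ ∈ ℂ with (η,ε,θ) ≠ (0,0,0), let M(λ,α,β,γ) be any one of the 𝔏-modules Ω(λ,α,β,γ), Δ(λ,α,β,γ), Θ(λ,α,β,γ), and let V(η,ε,θ) be an irreducible highest weight 𝔏-module with highest weight (η,ε,θ). If W is any 𝔏-module such that for every w ∈ W there exists a positive integer i with d_i · w = 0, then W is not isomorphic to the tensor product 𝔏-module M(λ,α,β,γ) ⊗ V(η,ε,θ). In particular, M(λ,α,β,γ) ⊗ V(η,ε,θ) is not isomorphic to any quotient of a universal Whittaker 𝔏-module. -/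
open scoped TensorProduct

noncomputable section

lemma dOp_one_ne_zero (lam ga : ℂ) (hlam : lam ≠ 0) (i : ℤ) : dOp lam ga i 1 ≠ 0 := by
  have h1 : dOp lam ga i 1 = lam ^ i • (sVar + MvPolynomial.C ((i : ℂ) * ga)) := by
    simp [dOp, shiftST, sVar, tVar]
  rw [h1]
  intro h
  have h2 := congrArg (MvPolynomial.eval ![1 - (i : ℂ) * ga, 0]) h
  have hz : lam ^ i ≠ 0 := zpow_ne_zero i hlam
  simp [sVar, smul_eq_mul] at h2
  exact hz (by linear_combination h2)

lemma tmul_ne_zero {M V : Type} [AddCommGroup M] [Module ℂ M] [AddCommGroup V] [Module ℂ V]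
    {p : M} {v : V} (hp : p ≠ 0) (hv : v ≠ 0) : p ⊗ₜ[ℂ] v ≠ 0 := by
  obtain ⟨g, hg⟩ : ∃ g : Module.Dual ℂ M, g p ≠ 0 := by
    by_contra hc
    push_neg at hc
    exact hp ((Module.forall_dual_apply_eq_zero_iff ℂ p).mp hc)
  intro h
  have h2 := congrArg ((TensorProduct.lid ℂ V).toLinearMap ∘ₗ LinearMap.rTensor V g) h
  simp only [LinearMap.comp_apply, LinearMap.rTensor_tmul, TensorProduct.lid_tmul, map_zero] at h2
  exact hv (by simpa [smul_eq_zero, hg] using h2)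

/-- if every element of an 𝔏-module `W` is annihilated by some `d_i` with
`i ≥ 1`, then `W` is not isomorphic to `M(λ,α,β,γ) ⊗ V(η,ε,θ)`; in particular no Whittaker
module is. -/
theorem stmt_12 {L : Type} [LieRing L] [LieAlgebra ℂ L] (A : AVAlgebra L)
    (lam al be ga eta eps th : ℂ) (hlam : lam ≠ 0) (hal : al ≠ 0)
    (hwt : (eta, eps, th) ≠ (0, 0, 0))
    (M : Type) [AddCommGroup M] [Module ℂ M] [LieRingModule L M] [LieModule ℂ L M] (φ : M ≃ₗ[ℂ] Pst)
    (hM : IsOmega A lam al be ga M φ ∨ IsDelta A lam al be ga M φ ∨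
      IsTheta A lam al be ga M φ)
    (V : Type) [AddCommGroup V] [Module ℂ V] [LieRingModule L V] [LieModule ℂ L V] (hV : IsIrrHW A V eta eps th)
    (W : Type) [AddCommGroup W] [Module ℂ W] [LieRingModule L W] [LieModule ℂ L W]
    (hW : ∀ w : W, ∃ i : ℤ, 1 ≤ i ∧ ⁅A.d i, w⁆ = 0) :
    IsEmpty (W ≃ₗ⁅ℂ,L⁆ (M ⊗[ℂ] V)) := by
  obtain ⟨hirr, v, hv0, hspan, hhw⟩ := hV
  have hd : ∀ (i : ℤ) (m : M), φ ⁅A.d i, m⁆ = dOp lam ga i (φ m) := by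
    rcases hM with h | h | h <;> exact h.2.2.2.1
  constructor
  intro ψ
  obtain ⟨i, hi1, hiw⟩ := hW (ψ.symm (φ.symm 1 ⊗ₜ[ℂ] v))
  have hdv : ⁅A.d i, v⁆ = 0 := (hhw.2.1 i hi1).2.2.2
  have h0 : (⁅A.d i, (φ.symm 1 ⊗ₜ[ℂ] v : M ⊗[ℂ] V)⁆ : M ⊗[ℂ] V) = 0 := by
    have h := congrArg ψ hiw
    rw [show ψ ⁅A.d i, ψ.symm (φ.symm 1 ⊗ₜ[ℂ] v)⁆ = ⁅A.d i, ψ (ψ.symm (φ.symm 1 ⊗ₜ[ℂ] v))⁆ from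
      LieModuleHom.map_lie (ψ : W →ₗ⁅ℂ,L⁆ M ⊗[ℂ] V) _ _] at h
    rw [LieModuleEquiv.apply_symm_apply,
      show ψ (0 : W) = 0 from (ψ : W ≃ₗ[ℂ] M ⊗[ℂ] V).map_zero] at h
    exact h
  rw [TensorProduct.LieModule.lie_tmul_right, hdv, TensorProduct.tmul_zero, add_zero] at h0
  have hp : (⁅A.d i, φ.symm (1 : Pst)⁆ : M) ≠ 0 := by
    intro h
    have := hd i (φ.symm 1)
    rw [h, map_zero, φ.apply_symm_apply] at this
    exact dOp_one_ne_zero lam ga hlam i this.symm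
  exact tmul_ne_zero hp hv0 h0


end
end
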